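/- Let C ∈ ℝ^{n×n} and suppose there exist indices i_1,…,i_r (1 ≤ r ≤ n) such that the diagonal entry C_{i_k i_k} is row-column dominant for each k ∈ [r]. Then every greedy matching π of C satisfies π(i_k) = i_k for all k ∈ [r]; in particular overlap(π, id) ≥ r/n. -/

import Mathlib

open MeasureTheory ProbabilityTheory Finset
open scoped NNReal ENNReal

noncomputable section

/-- The permutation matrix of `x`: entry `(k,l)` is 1 iff `x k = l`. -/
def permMat {n : ℕ} (x : Equiv.Perm (Fin n)) : Matrix (Fin n) (Fin n) ℝ :=
  fun k l => if x k = l then 1 else 0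

/-- Entry `(i,j)` of the triple product `A * X * B`. -/
def matProd3 {n : ℕ} (A X B : Matrix (Fin n) (Fin n) ℝ) : Matrix (Fin n) (Fin n) ℝ :=
  fun i j => ∑ k, ∑ l, A i k * X k l * B l j

/-- The set of fixed points of a permutation of `Fin n`. -/
def fixedPts {n : ℕ} (x : Equiv.Perm (Fin n)) : Finset (Fin n) :=
  Finset.univ.filter fun i => x i = i

/-- `π` is a possible output of the greedy maximum weight matching (GMWM) algorithm
on input `C`: there is an ordering `τ 0, τ 1, …` of the rows such that at each step
the chosen entry `C (τ k) (π (τ k))` is maximal among all entries whose row and column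
have not yet been used. -/
def IsGreedyMatching {n : ℕ} (C : Matrix (Fin n) (Fin n) ℝ) (π : Equiv.Perm (Fin n)) : Prop :=
  ∃ τ : Equiv.Perm (Fin n), ∀ k i j : Fin n,
    (∀ k', k' < k → τ k' ≠ i) → (∀ k', k' < k → π (τ k') ≠ j) →
      C i j ≤ C (τ k) (π (τ k))

/-- A GOE Wigner matrix: symmetric, jointly independent upper-triangular entries,
off-diagonal entries `N(0, 1/n)`, diagonal entries `N(0, 2/n)`. -/
def IsWigner {Ω : Type*} [MeasureSpace Ω] (n : ℕ)
    (A : Ω → Matrix (Fin n) (Fin n) ℝ) : Prop :=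
  (∀ ω i j, A ω i j = A ω j i) ∧
  (∀ i j, Measurable fun ω => A ω i j) ∧
  iIndepFun
    (fun (p : {q : Fin n × Fin n // q.1 ≤ q.2}) ω => A ω p.1.1 p.1.2) volume ∧
  (∀ i j : Fin n, i < j →
    Measure.map (fun ω => A ω i j) volume = gaussianReal 0 ((1 : ℝ≥0) / n)) ∧
  (∀ i : Fin n,
    Measure.map (fun ω => A ω i i) volume = gaussianReal 0 ((2 : ℝ≥0) / n))

/-- A pair of GOE Wigner matrices whose upper-triangular entries are all mutually
independent (i.e. `A` and `Z` are two independent GOE Wigner matrices). -/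
def IsWignerPair {Ω : Type*} [MeasureSpace Ω] (n : ℕ)
    (A Z : Ω → Matrix (Fin n) (Fin n) ℝ) : Prop :=
  (∀ ω i j, A ω i j = A ω j i) ∧ (∀ ω i j, Z ω i j = Z ω j i) ∧
  (∀ i j, Measurable fun ω => A ω i j) ∧ (∀ i j, Measurable fun ω => Z ω i j) ∧
  iIndepFun
    (fun (p : Bool × {q : Fin n × Fin n // q.1 ≤ q.2}) ω =>
      if p.1 then A ω p.2.1.1 p.2.1.2 else Z ω p.2.1.1 p.2.1.2) volume ∧
  (∀ i j : Fin n, i < j →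
    Measure.map (fun ω => A ω i j) volume = gaussianReal 0 ((1 : ℝ≥0) / n) ∧
    Measure.map (fun ω => Z ω i j) volume = gaussianReal 0 ((1 : ℝ≥0) / n)) ∧
  (∀ i : Fin n,
    Measure.map (fun ω => A ω i i) volume = gaussianReal 0 ((2 : ℝ≥0) / n) ∧
    Measure.map (fun ω => Z ω i i) volume = gaussianReal 0 ((2 : ℝ≥0) / n))

/-- The constant `c(σ)` from the paper. -/
def cconst (σ : ℝ) : ℝ := (1 / 384) * (1 - σ ^ 2) / (1 + 2 * σ * Real.sqrt (1 - σ ^ 2))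

/-- Frobenius norm of a real matrix. -/
def frobNorm {n : ℕ} (M : Matrix (Fin n) (Fin n) ℝ) : ℝ :=
  Real.sqrt (∑ i, ∑ j, (M i j) ^ 2)

/-- Set the diagonal of a matrix to zero. -/
def offdiag {n : ℕ} (M : Matrix (Fin n) (Fin n) ℝ) : Matrix (Fin n) (Fin n) ℝ :=
  fun i j => if i = j then 0 else M i j

/-- If `C` has `r` distinct indices whose diagonal entries are row-column
dominant, then every greedy matching `π` of `C` fixes those indices; in particular
`overlap(π, id) ≥ r/n`. -/
theorem stmt1 {n : ℕ} (C : Matrix (Fin n) (Fin n) ℝ) (r : ℕ)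
    (hr1 : 1 ≤ r) (hrn : r ≤ n)
    (idx : Fin r → Fin n) (hinj : Function.Injective idx)
    (hdom : ∀ k : Fin r,
      (∀ i' : Fin n, i' ≠ idx k → C i' (idx k) < C (idx k) (idx k)) ∧
      (∀ j' : Fin n, j' ≠ idx k → C (idx k) j' < C (idx k) (idx k)))
    (π : Equiv.Perm (Fin n)) (hπ : IsGreedyMatching C π) :
    (∀ k : Fin r, π (idx k) = idx k) ∧
    (r : ℝ) / n ≤ ((fixedPts π).card : ℝ) / n := by
  obtain ⟨τ, hτ⟩ := hπ
  have hfix : ∀ k : Fin r, π (idx k) = idx k := by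
    intro k
    by_contra hne
    set i0 := idx k with hi0
    set m := τ.symm i0 with hmdef
    have hm : τ m = i0 := τ.apply_symm_apply i0
    set m' := τ.symm (π.symm i0) with hm'def
    have hm' : π (τ m') = i0 := by simp [hm'def]
    rcases le_or_gt m m' with hle | hlt
    · have h := hτ m i0 i0
        (fun k' hk' h => absurd (τ.injective (h.trans hm.symm)) (ne_of_lt hk'))
        (fun k' hk' h => by
          have h1 : τ k' = τ m' := π.injective (h.trans hm'.symm)
          exact absurd (τ.injective h1) (ne_of_lt (lt_of_lt_of_le hk' hle)))
      rw [hm] at h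
      have := (hdom k).2 (π i0) hne
      linarith
    · have h := hτ m' i0 i0
        (fun k' hk' h => absurd (τ.injective (h.trans hm.symm))
          (ne_of_lt (hk'.trans hlt)))
        (fun k' hk' h => by
          have h1 : τ k' = τ m' := π.injective (h.trans hm'.symm)
          exact absurd (τ.injective h1) (ne_of_lt hk'))
      rw [hm'] at h
      have hne' : τ m' ≠ i0 := fun hc =>
        absurd (τ.injective (hc.trans hm.symm)) (ne_of_lt hlt)
      have := (hdom k).1 (τ m') hne'
      linarith
  refine ⟨hfix, ?_⟩
  have hsub : Finset.univ.image idx ⊆ fixedPts π := by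
    intro i hi
    obtain ⟨k, _, rfl⟩ := Finset.mem_image.mp hi
    simp [fixedPts, hfix k]
  have hcard : (r : ℝ) ≤ ((fixedPts π).card : ℝ) := by
    have := Finset.card_le_card hsub
    rw [Finset.card_image_of_injective _ hinj, Finset.card_univ,
      Fintype.card_fin] at this
    exact_mod_cast this
  have hn : (0 : ℝ) < n := by
    have : 0 < n := lt_of_lt_of_le hr1 hrn
    exact_mod_cast this
  exact div_le_div_of_nonneg_right hcard hn.le |>.trans_eq rfl

end
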